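/- If A* is a global minimizer of Ψ over ℝ^{n+1}, then the convex hulls of G₊(A*) and G₋(A*) in ℝ^{n+1} have nonempty intersection. -/

import Mathlib

/-- The modelling function `L(A,x) = a₀ + ∑_{i=1}^n aᵢ gᵢ(x)`. -/
noncomputable def modelFun {d n : ℕ} (g : Fin n → (Fin d → ℝ) → ℝ)
    (A : Fin (n + 1) → ℝ) (x : Fin d → ℝ) : ℝ :=
  A 0 + ∑ i : Fin n, A i.succ * g i x

/-- The uniform approximation error `Ψ(A) = sup_{x ∈ Q} |f(x) − L(A,x)|`. -/
noncomputable def uniformError {d n : ℕ} (Q : Set (Fin d → ℝ))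
    (f : (Fin d → ℝ) → ℝ) (g : Fin n → (Fin d → ℝ) → ℝ)
    (A : Fin (n + 1) → ℝ) : ℝ :=
  sSup ((fun x => |f x - modelFun g A x|) '' Q)

/-- The set of maximal positive deviation points. -/
def Eplus {d n : ℕ} (Q : Set (Fin d → ℝ)) (f : (Fin d → ℝ) → ℝ)
    (g : Fin n → (Fin d → ℝ) → ℝ) (A : Fin (n + 1) → ℝ) : Set (Fin d → ℝ) :=
  {x ∈ Q | f x - modelFun g A x = uniformError Q f g A}

/-- The set of maximal negative deviation points. -/
def Eminus {d n : ℕ} (Q : Set (Fin d → ℝ)) (f : (Fin d → ℝ) → ℝ)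
    (g : Fin n → (Fin d → ℝ) → ℝ) (A : Fin (n + 1) → ℝ) : Set (Fin d → ℝ) :=
  {x ∈ Q | modelFun g A x - f x = uniformError Q f g A}

/-- The vector `(1, g₁(x), …, gₙ(x)) ∈ ℝ^{n+1}`. -/
def gVec {d n : ℕ} (g : Fin n → (Fin d → ℝ) → ℝ) (x : Fin d → ℝ) :
    Fin (n + 1) → ℝ :=
  Fin.cons 1 (fun i => g i x)

/-- `G₊(A) = {(1,g₁(x),…,gₙ(x)) : x ∈ E₊(A)}`. -/
def Gplus {d n : ℕ} (Q : Set (Fin d → ℝ)) (f : (Fin d → ℝ) → ℝ)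
    (g : Fin n → (Fin d → ℝ) → ℝ) (A : Fin (n + 1) → ℝ) :
    Set (Fin (n + 1) → ℝ) :=
  gVec g '' Eplus Q f g A

/-- `G₋(A) = {(1,g₁(x),…,gₙ(x)) : x ∈ E₋(A)}`. -/
def Gminus {d n : ℕ} (Q : Set (Fin d → ℝ)) (f : (Fin d → ℝ) → ℝ)
    (g : Fin n → (Fin d → ℝ) → ℝ) (A : Fin (n + 1) → ℝ) :
    Set (Fin (n + 1) → ℝ) :=
  gVec g '' Eminus Q f g A


open Set Finset in

lemma isCompact_convexHull_fin {N : ℕ} {s : Set (Fin N → ℝ)} (hs : IsCompact s) :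
    IsCompact (convexHull ℝ s) := by
  rcases s.eq_empty_or_nonempty with rfl | ⟨p₀, hp₀⟩
  · simp [isCompact_empty]
  set m := N + 1 with hm
  have key : convexHull ℝ s =
      (fun wz : (Fin m → ℝ) × (Fin m → (Fin N → ℝ)) => ∑ i, wz.1 i • wz.2 i) ''
        (stdSimplex ℝ (Fin m) ×ˢ Set.univ.pi fun _ => s) := by
    apply Set.Subset.antisymm
    · intro x hx
      obtain ⟨ι, hι, z, w, hzs, haff, hw0, hw1, hsum⟩ :=
        eq_pos_convex_span_of_mem_convexHull hx
      have hcard : Fintype.card ι ≤ m := by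
        have h1 := haff.card_le_finrank_succ
        have h2 : Module.finrank ℝ (vectorSpan ℝ (Set.range z)) ≤ N := by
          have := Submodule.finrank_le (vectorSpan ℝ (Set.range z))
          simpa [Module.finrank_fin_fun] using this
        omega
      obtain ⟨e⟩ : Nonempty (ι ↪ Fin m) :=
        Function.Embedding.nonempty_of_card_le (by simpa using hcard)
      classical
      set w' : Fin m → ℝ := fun j => if h : ∃ i, e i = j then w h.choose else 0 with hw'
      set z' : Fin m → (Fin N → ℝ) := fun j => if h : ∃ i, e i = j then z h.choose else p₀ with hz'
      have hwe : ∀ i, w' (e i) = w i := by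
        intro i
        have h : ∃ i', e i' = e i := ⟨i, rfl⟩
        simp only [hw', dif_pos h]
        congr 1
        exact e.injective h.choose_spec
      have hze : ∀ i, z' (e i) = z i := by
        intro i
        have h : ∃ i', e i' = e i := ⟨i, rfl⟩
        simp only [hz', dif_pos h]
        exact congrArg z (e.injective h.choose_spec)
      refine ⟨(w', z'), ⟨?_, ?_⟩, ?_⟩
      · constructor
        · intro j
          by_cases h : ∃ i, e i = j
          · simp only [hw', dif_pos h]; exact (hw0 _).le
          · simp [hw', dif_neg h]
        · rw [← hw1]
          rw [show (1:ℝ) = ∑ i, w i from hw1.symm] at *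
          have : ∑ j : Fin m, w' j = ∑ j ∈ Finset.univ.map e, w' j := by
            refine (Finset.sum_subset (Finset.subset_univ _) ?_).symm
            intro j _ hj
            have h : ¬ ∃ i, e i = j := by
              simpa [Finset.mem_map] using hj
            simp [hw', dif_neg h]
          rw [this, Finset.sum_map]
          exact Finset.sum_congr rfl fun i _ => hwe i
      · intro j _
        by_cases h : ∃ i, e i = j
        · simp only [hz', dif_pos h]
          exact hzs ⟨_, rfl⟩
        · simp only [hz', dif_neg h]
          exact hp₀
      · have : ∑ j : Fin m, w' j • z' j = ∑ j ∈ Finset.univ.map e, w' j • z' j := by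
          refine (Finset.sum_subset (Finset.subset_univ _) ?_).symm
          intro j _ hj
          have h : ¬ ∃ i, e i = j := by simpa [Finset.mem_map] using hj
          simp [hw', dif_neg h]
        simp only [this, Finset.sum_map]
        rw [← hsum]
        exact Finset.sum_congr rfl fun i _ => by rw [hwe, hze]
    · rintro y ⟨⟨w, z⟩, ⟨hw, hz⟩, rfl⟩
      exact (convex_convexHull ℝ s).sum_mem (fun i _ => hw.1 i) hw.2
        (fun i _ => subset_convexHull ℝ s (hz i (Set.mem_univ i)))
  rw [key]
  exact ((isCompact_stdSimplex (𝕜 := ℝ) (ι := Fin m)).prod (isCompact_univ_pi fun _ => hs)).image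
    (continuous_finset_sum _ fun i _ =>
      ((continuous_apply i).comp continuous_fst).smul
        ((continuous_apply i).comp continuous_snd))

lemma continuous_modelFun {d n : ℕ} {g : Fin n → (Fin d → ℝ) → ℝ}
    (hg : ∀ i, Continuous (g i)) (A : Fin (n + 1) → ℝ) :
    Continuous (modelFun g A) :=
  continuous_const.add (continuous_finset_sum _ fun i _ => continuous_const.mul (hg i))

lemma modelFun_add_smul {d n : ℕ} (g : Fin n → (Fin d → ℝ) → ℝ)
    (A B : Fin (n + 1) → ℝ) (ε : ℝ) (x : Fin d → ℝ) :
    modelFun g (A + ε • B) x = modelFun g A x + ε * modelFun g B x := by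
  have hterm : ∀ i : Fin n, (A i.succ + ε * B i.succ) * g i x
      = A i.succ * g i x + ε * (B i.succ * g i x) := fun i => by ring
  simp only [modelFun, Pi.add_apply, Pi.smul_apply, smul_eq_mul, hterm,
    Finset.sum_add_distrib, ← Finset.mul_sum]
  ring

lemma core_contradiction {d n : ℕ}
    (Q : Set (Fin d → ℝ)) (hQne : Q.Nonempty) (hQc : IsCompact Q)
    (f : (Fin d → ℝ) → ℝ) (hf : Continuous f)
    (g : Fin n → (Fin d → ℝ) → ℝ) (hg : ∀ i, Continuous (g i))
    (Astar : Fin (n + 1) → ℝ)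
    (hopt : ∀ A : Fin (n + 1) → ℝ, uniformError Q f g Astar ≤ uniformError Q f g A)
    (B : Fin (n + 1) → ℝ)
    (hBp : ∀ x ∈ Eplus Q f g Astar, 0 < modelFun g B x)
    (hBm : ∀ x ∈ Eminus Q f g Astar, modelFun g B x < 0) : False := by
  classical
  set Ψ := uniformError Q f g Astar with hΨdef
  set e : (Fin d → ℝ) → ℝ := fun x => f x - modelFun g Astar x with hedef
  have hce : Continuous e := hf.sub (continuous_modelFun hg Astar)
  have hbdd : ∀ x ∈ Q, |e x| ≤ Ψ := by
    intro x hx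
    exact le_csSup (hQc.bddAbove_image hce.abs.continuousOn) ⟨x, hx, rfl⟩
  set h := modelFun g B with hhdef
  have hch : Continuous h := continuous_modelFun hg B
  obtain ⟨xM, hxMQ, hxMmax⟩ := hQc.exists_isMaxOn hQne hch.abs.continuousOn
  set M := |h xM| with hMdef
  have hM0 : 0 ≤ M := abs_nonneg _
  have hM : ∀ x ∈ Q, |h x| ≤ M := fun x hx => hxMmax hx
  -- δ₊
  have hdp : ∃ δp, δp < Ψ ∧ ∀ x ∈ Q, h x ≤ 0 → e x ≤ δp := by
    set K := Q ∩ {x | h x ≤ 0} with hKdef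
    have hKc : IsCompact K := hQc.inter_right (isClosed_le hch continuous_const)
    rcases K.eq_empty_or_nonempty with hKe | hKne
    · refine ⟨Ψ - 1, by linarith, fun x hx hhx => absurd ?_ (Set.eq_empty_iff_forall_notMem.1 hKe x)⟩
      exact ⟨hx, hhx⟩
    · obtain ⟨y, hyK, hymax⟩ := hKc.exists_isMaxOn hKne (hce.continuousOn.mono Set.inter_subset_left)
      have hyQ : y ∈ Q := hyK.1
      have h1 : e y ≤ Ψ := (le_abs_self _).trans (hbdd y hyQ)
      have h2 : e y ≠ Ψ := by
        intro heq
        exact absurd (hBp y ⟨hyQ, heq⟩) (not_lt.2 hyK.2)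
      exact ⟨e y, lt_of_le_of_ne h1 h2, fun x hx hhx => hymax ⟨hx, hhx⟩⟩
  -- δ₋
  have hdm : ∃ δm, δm < Ψ ∧ ∀ x ∈ Q, 0 ≤ h x → -e x ≤ δm := by
    set K := Q ∩ {x | 0 ≤ h x} with hKdef
    have hKc : IsCompact K := hQc.inter_right (isClosed_le continuous_const hch)
    rcases K.eq_empty_or_nonempty with hKe | hKne
    · refine ⟨Ψ - 1, by linarith, fun x hx hhx => absurd ?_ (Set.eq_empty_iff_forall_notMem.1 hKe x)⟩
      exact ⟨hx, hhx⟩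
    · obtain ⟨y, hyK, hymax⟩ := hKc.exists_isMaxOn hKne
        ((hce.neg.continuousOn).mono Set.inter_subset_left)
      have hyQ : y ∈ Q := hyK.1
      have h1 : -e y ≤ Ψ := (neg_le_abs _).trans (hbdd y hyQ)
      have h2 : -e y ≠ Ψ := by
        intro heq
        have hmem : y ∈ Eminus Q f g Astar := ⟨hyQ, by simpa [hedef, neg_sub] using heq⟩
        exact absurd (hBm y hmem) (not_lt.2 hyK.2)
      exact ⟨-e y, lt_of_le_of_ne h1 h2, fun x hx hhx => hymax ⟨hx, hhx⟩⟩
  obtain ⟨δp, hδp, hp⟩ := hdp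
  obtain ⟨δm, hδm, hm⟩ := hdm
  set δ := max δp δm with hδdef
  have hδ : δ < Ψ := max_lt hδp hδm
  set ε := (Ψ - δ) / (2 * (M + 1)) with hεdef
  have hε : 0 < ε := div_pos (by linarith) (by linarith)
  have hεM : ε * M < Ψ - δ := by
    rw [hεdef, div_mul_eq_mul_div, div_lt_iff₀ (by linarith : (0:ℝ) < 2 * (M + 1))]
    nlinarith
  set A := Astar + ε • B with hAdef
  have key : ∀ x ∈ Q, |f x - modelFun g A x| < Ψ := by
    intro x hx
    have heA : f x - modelFun g A x = e x - ε * h x := by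
      rw [hAdef, modelFun_add_smul]; simp [hedef, hhdef]; ring
    rw [heA, abs_lt]
    have hb := abs_le.1 (hbdd x hx)
    have hhb := abs_le.1 (hM x hx)
    constructor
    · rcases lt_or_ge (h x) 0 with hneg | hpos
      · nlinarith
      · have h1 := hm x hx hpos
        have h2 : ε * h x ≤ ε * M := mul_le_mul_of_nonneg_left hhb.2 hε.le
        have h3 : δm ≤ δ := le_max_right _ _
        nlinarith
    · rcases lt_or_ge 0 (h x) with hposx | hnegx
      · nlinarith
      · have h1 := hp x hx hnegx
        have h2 : ε * (-h x) ≤ ε * M :=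
          mul_le_mul_of_nonneg_left (by linarith [hhb.1]) hε.le
        have h3 : δp ≤ δ := le_max_left _ _
        nlinarith
  obtain ⟨x0, hx0Q, hx0eq⟩ := hQc.exists_sSup_image_eq hQne
    ((hf.sub (continuous_modelFun hg A)).abs.continuousOn)
  have : uniformError Q f g A < Ψ := by
    rw [uniformError, show (fun x => |f x - modelFun g A x|) = (fun x => |(f - modelFun g A) x|) from rfl, hx0eq]
    exact key x0 hx0Q
  exact absurd (hopt A) (not_le.2 this)

lemma continuous_gVec {d n : ℕ} {g : Fin n → (Fin d → ℝ) → ℝ}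
    (hg : ∀ i, Continuous (g i)) : Continuous (gVec g) := by
  apply continuous_pi
  intro j
  refine Fin.cases ?_ ?_ j
  · simpa [gVec] using continuous_const
  · intro i
    simpa [gVec] using hg i


/-- If `A*` is a global minimizer of `Ψ`, then the convex hulls of `G₊(A*)` and
`G₋(A*)` have nonempty intersection. -/
theorem optimal_imp_convexHulls_intersect
    (d n : ℕ) (hd : 1 ≤ d) (hn : 1 ≤ n)
    (Q : Set (Fin d → ℝ)) (hQne : Q.Nonempty) (hQc : IsCompact Q)
    (f : (Fin d → ℝ) → ℝ) (hf : Continuous f)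
    (g : Fin n → (Fin d → ℝ) → ℝ) (hg : ∀ i, Continuous (g i))
    (Astar : Fin (n + 1) → ℝ)
    (hopt : ∀ A : Fin (n + 1) → ℝ, uniformError Q f g Astar ≤ uniformError Q f g A) :
    (convexHull ℝ (Gplus Q f g Astar) ∩ convexHull ℝ (Gminus Q f g Astar)).Nonempty := by
  classical
  by_contra hcon
  have hsucc0 : ∀ (B : Fin (n+1) → ℝ) (c : ℝ) (x : Fin d → ℝ),
      modelFun g (fun j => if j = 0 then c else (0:ℝ)) x = c := by
    intro B c x
    simp [modelFun, Fin.succ_ne_zero]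
  rcases (Eplus Q f g Astar).eq_empty_or_nonempty with hEp | hEp
  · exact core_contradiction Q hQne hQc f hf g hg Astar hopt
      (fun j => if j = 0 then (-1:ℝ) else 0)
      (fun x hx => absurd hx (by simp [hEp]))
      (fun x _ => by rw [hsucc0 0 (-1) x]; norm_num)
  rcases (Eminus Q f g Astar).eq_empty_or_nonempty with hEm | hEm
  · exact core_contradiction Q hQne hQc f hf g hg Astar hopt
      (fun j => if j = 0 then (1:ℝ) else 0)
      (fun x _ => by rw [hsucc0 0 1 x]; norm_num)
      (fun x hx => absurd hx (by simp [hEm]))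
  · -- both extreme sets nonempty: separate the convex hulls
    have hdisj : Disjoint (convexHull ℝ (Gminus Q f g Astar)) (convexHull ℝ (Gplus Q f g Astar)) := by
      rw [Set.disjoint_iff_inter_eq_empty, Set.inter_comm]
      exact Set.not_nonempty_iff_eq_empty.1 hcon
    have hePc : IsCompact (Eplus Q f g Astar) :=
      hQc.inter_right (isClosed_eq ((hf.sub (continuous_modelFun hg Astar))) continuous_const)
    have heMc : IsCompact (Eminus Q f g Astar) :=
      hQc.inter_right (isClosed_eq (((continuous_modelFun hg Astar).sub hf)) continuous_const)
    have hGpc : IsCompact (convexHull ℝ (Gplus Q f g Astar)) :=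
      isCompact_convexHull_fin (hePc.image (continuous_gVec hg))
    have hGmc : IsCompact (convexHull ℝ (Gminus Q f g Astar)) :=
      isCompact_convexHull_fin (heMc.image (continuous_gVec hg))
    obtain ⟨φ, u, v, hu, huv, hv⟩ := geometric_hahn_banach_compact_closed
      (convex_convexHull ℝ _) hGmc (convex_convexHull ℝ _) hGpc.isClosed hdisj
    set c : ℝ := (u + v) / 2 with hcdef
    set B : Fin (n + 1) → ℝ := fun j =>
      if j = 0 then φ (fun k => if (0 : Fin (n+1)) = k then (1:ℝ) else 0) - c
      else φ (fun k => if j = k then (1:ℝ) else 0) with hBdef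
    have hmodel : ∀ x : Fin d → ℝ, modelFun g B x = φ (gVec g x) - c := by
      intro x
      have hφ : φ (gVec g x) = ∑ j : Fin (n+1), gVec g x j •
          φ (fun k => if j = k then (1:ℝ) else 0) :=
        LinearMap.pi_apply_eq_sum_univ (φ : (Fin (n+1) → ℝ) →ₗ[ℝ] ℝ) (gVec g x)
      rw [hφ, Fin.sum_univ_succ]
      simp only [modelFun, hBdef, if_pos rfl, gVec, Fin.cons_zero, Fin.cons_succ,
        smul_eq_mul, one_mul]
      have : ∀ i : Fin n, (if i.succ = (0 : Fin (n+1)) then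
            φ (fun k => if (0:Fin (n+1)) = k then (1:ℝ) else 0) - c
          else φ (fun k => if i.succ = k then (1:ℝ) else 0)) =
          φ (fun k => if i.succ = k then (1:ℝ) else 0) := fun i => by
        rw [if_neg (Fin.succ_ne_zero i)]
      simp only [this]
      rw [Finset.sum_congr rfl (fun i _ => mul_comm (φ fun k => if i.succ = k then (1:ℝ) else 0)
        (g i x))]
      ring
    have hcu : u < c := by rw [hcdef]; linarith
    have hcv : c < v := by rw [hcdef]; linarith
    refine core_contradiction Q hQne hQc f hf g hg Astar hopt B ?_ ?_
    · intro x hx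
      have : gVec g x ∈ convexHull ℝ (Gplus Q f g Astar) :=
        subset_convexHull ℝ _ ⟨x, hx, rfl⟩
      have := hv _ this
      rw [hmodel x]
      linarith
    · intro x hx
      have : gVec g x ∈ convexHull ℝ (Gminus Q f g Astar) :=
        subset_convexHull ℝ _ ⟨x, hx, rfl⟩
      have := hu _ this
      rw [hmodel x]
      linarith
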